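/- arXiv:0903.3180 — 3 statements merged into one kernel-verified Lean document; each statement's English description precedes it below -/
import Mathlib

section
/- Let q ≥ 0 be a fixed integer and let λ_j = 2πj/n denote the Fourier frequencies. Then there exist a constant η > 0 and N ∈ ℕ such that for all n ≥ N and all real numbers a_0, a_1, …, a_q, one has n^{-1} ∑_{j=1}^{⌊n/2⌋} (j/n)^{2q+1} | ∑_{r=0}^{q} (1 − e^{iλ_j})^{-r} a_r |^2 ≥ η ∑_{r=0}^{q} a_r^2. -/
open Complex Finset

noncomputable def zc (l : ℝ) : ℂ := (1 - Complex.exp (Complex.I * l))⁻¹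

lemma normSq_one_sub_exp (l : ℝ) :
    Complex.normSq (1 - Complex.exp (Complex.I * l)) = 2 - 2 * Real.cos l := by
  rw [mul_comm]
  have h1 : (1 - Complex.exp (l * I)).re = 1 - Real.cos l := by
    simp [Complex.exp_ofReal_mul_I_re]
  have h2 : (1 - Complex.exp (l * I)).im = -Real.sin l := by
    simp [Complex.exp_ofReal_mul_I_im]
  rw [Complex.normSq_apply, h1, h2]
  have := Real.sin_sq_add_cos_sq l
  ring_nf
  nlinarith [Real.sin_sq_add_cos_sq l]

lemma abs_one_sub_exp_sq (l : ℝ) :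
    (‖1 - Complex.exp (Complex.I * l)‖)^2 = 2 - 2 * Real.cos l := by
  rw [Complex.sq_norm, normSq_one_sub_exp]

lemma abs_exp_sub_one_le' (l : ℝ) : ‖Complex.exp (Complex.I * l) - 1‖ ≤ |l| := by
  have h : (‖Complex.exp (Complex.I * l) - 1‖)^2 ≤ |l|^2 := by
    have : ‖Complex.exp (Complex.I * l) - 1‖
        = ‖1 - Complex.exp (Complex.I * l)‖ := by
      rw [← norm_neg]; ring_nf
    rw [this, abs_one_sub_exp_sq]
    have := Real.one_sub_sq_div_two_le_cos (x := l)
    rw [_root_.sq_abs]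
    nlinarith
  have h0 : (0:ℝ) ≤ |l| := abs_nonneg l
  nlinarith [norm_nonneg (Complex.exp (Complex.I * l) - 1)]

lemma abs_exp_sub_exp_le (l m : ℝ) :
    ‖Complex.exp (Complex.I * l) - Complex.exp (Complex.I * m)‖ ≤ |l - m| := by
  have : Complex.exp (Complex.I * l) - Complex.exp (Complex.I * m)
      = Complex.exp (Complex.I * m) * (Complex.exp (Complex.I * (l - m)) - 1) := by
    rw [mul_sub, ← Complex.exp_add]; ring_nf
  rw [this, norm_mul]
  have h1 : ‖Complex.exp (Complex.I * m)‖ = 1 := by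
    rw [mul_comm]; exact Complex.norm_exp_ofReal_mul_I m
  rw [h1, one_mul]
  have := abs_exp_sub_one_le' (l - m)
  rwa [Complex.ofReal_sub] at this

lemma abs_one_sub_exp_ge (l : ℝ) (h1 : Real.pi/2 ≤ l) (h2 : l ≤ Real.pi) :
    Real.sqrt 2 ≤ ‖1 - Complex.exp (Complex.I * l)‖ := by
  have hcos : Real.cos l ≤ 0 := Real.cos_nonpos_of_pi_div_two_le_of_le h1 (by
    linarith [Real.pi_pos])
  have hsq : (2:ℝ) ≤ (‖1 - Complex.exp (Complex.I * l)‖)^2 := by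
    rw [abs_one_sub_exp_sq]; linarith
  have := Real.sqrt_le_sqrt hsq
  rwa [Real.sqrt_sq (norm_nonneg _)] at this

lemma one_sub_exp_ne (l : ℝ) (h1 : Real.pi/2 ≤ l) (h2 : l ≤ Real.pi) :
    1 - Complex.exp (Complex.I * l) ≠ 0 := by
  intro h
  have h2' := abs_one_sub_exp_ge l h1 h2
  rw [h] at h2'
  simp at h2'
  nlinarith [Real.sq_sqrt (by norm_num : (0:ℝ) ≤ 2), Real.sqrt_nonneg 2]

lemma zc_abs_le (l : ℝ) (h1 : Real.pi/2 ≤ l) (h2 : l ≤ Real.pi) :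
    ‖zc l‖ ≤ 1 := by
  rw [zc, norm_inv]
  have h := abs_one_sub_exp_ge l h1 h2
  have h2' : (1:ℝ) ≤ Real.sqrt 2 := by
    rw [show (1:ℝ) = Real.sqrt 1 by simp]
    exact Real.sqrt_le_sqrt (by norm_num)
  rw [inv_le_one_iff₀]
  right; linarith

lemma zc_lip (l m : ℝ) (hl1 : Real.pi/2 ≤ l) (hl2 : l ≤ Real.pi)
    (hm1 : Real.pi/2 ≤ m) (hm2 : m ≤ Real.pi) :
    ‖zc l - zc m‖ ≤ |l - m| / 2 := by
  have hl0 := one_sub_exp_ne l hl1 hl2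
  have hm0 := one_sub_exp_ne m hm1 hm2
  have key : zc l - zc m = (Complex.exp (Complex.I * l) - Complex.exp (Complex.I * m)) *
      ((1 - Complex.exp (Complex.I * l))⁻¹ * (1 - Complex.exp (Complex.I * m))⁻¹) := by
    rw [zc, zc]
    field_simp
    ring
  rw [key, norm_mul, norm_mul, norm_inv, norm_inv]
  have h1 := abs_exp_sub_exp_le l m
  have h2 := abs_one_sub_exp_ge l hl1 hl2
  have h3 := abs_one_sub_exp_ge m hm1 hm2
  have hs2 : (0:ℝ) < Real.sqrt 2 := by positivity
  have e1 : (1 - Complex.exp (Complex.I * l)) ≠ 0 := hl0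
  have i1 : (‖1 - Complex.exp (Complex.I * l)‖)⁻¹ ≤ (Real.sqrt 2)⁻¹ :=
    inv_anti₀ hs2 h2
  have i2 : (‖1 - Complex.exp (Complex.I * m)‖)⁻¹ ≤ (Real.sqrt 2)⁻¹ :=
    inv_anti₀ hs2 h3
  have habs1 : (0:ℝ) ≤ ‖Complex.exp (Complex.I * l) - Complex.exp (Complex.I * m)‖ :=
    norm_nonneg _
  have hinv : (Real.sqrt 2)⁻¹ * (Real.sqrt 2)⁻¹ = 2⁻¹ := by
    rw [← mul_inv]
    congr 1
    exact Real.mul_self_sqrt (by norm_num)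
  calc ‖Complex.exp (Complex.I * l) - Complex.exp (Complex.I * m)‖ *
        ((‖1 - Complex.exp (Complex.I * l)‖)⁻¹ *
         (‖1 - Complex.exp (Complex.I * m)‖)⁻¹)
      ≤ |l - m| * ((Real.sqrt 2)⁻¹ * (Real.sqrt 2)⁻¹) := by
        apply mul_le_mul h1
        · apply mul_le_mul i1 i2 (by positivity) (by positivity)
        · positivity
        · positivity
    _ = |l - m| / 2 := by rw [hinv]; ring

lemma zc_inj {l m : ℝ} (hl0 : 0 < l) (hl : l < 2*Real.pi) (hm0 : 0 < m)
    (hm : m < 2*Real.pi) (hne : l ≠ m) : zc l ≠ zc m := by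
  intro h
  apply hne
  have h2 : (1 - Complex.exp (Complex.I * l)) = (1 - Complex.exp (Complex.I * m)) :=
    inv_injective h
  have h3 : Complex.exp (Complex.I * l) = Complex.exp (Complex.I * m) := by
    have := sub_right_injective h2
    exact this
  rw [Complex.exp_eq_exp_iff_exists_int] at h3
  obtain ⟨k, hk⟩ := h3
  have hk' : (l:ℂ) = (m:ℂ) + k * (2*Real.pi) := by
    have hI : Complex.I ≠ 0 := Complex.I_ne_zero
    have : Complex.I * l = Complex.I * ((m:ℂ) + k * (2*Real.pi)) := by
      rw [hk]; ring
    exact mul_left_cancel₀ hI this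
  have hkr : l = m + k * (2*Real.pi) := by
    exact_mod_cast hk'
  have hπ := Real.pi_pos
  have hk0 : k = 0 := by
    rcases lt_trichotomy k 0 with h | h | h
    · have : (k:ℝ) ≤ -1 := by exact_mod_cast Int.le_of_lt_add_one (by omega : k < -1 + 1)
      nlinarith
    · exact h
    · have : (1:ℝ) ≤ (k:ℝ) := by exact_mod_cast h
      nlinarith
  rw [hk0] at hkr; simpa using hkr


lemma pow_lip (z w : ℂ) (hz : ‖z‖ ≤ 1) (hw : ‖w‖ ≤ 1) (r : ℕ) :
    ‖z^r - w^r‖ ≤ r * ‖z - w‖ := by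
  induction r with
  | zero => simp
  | succ r ih =>
    have key : z^(r+1) - w^(r+1) = z^r * (z - w) + w * (z^r - w^r) := by ring
    rw [key]
    calc ‖z^r * (z - w) + w * (z^r - w^r)‖
        ≤ ‖z^r * (z - w)‖ + ‖w * (z^r - w^r)‖ :=
          norm_add_le _ _
      _ = ‖z‖ ^ r * ‖z - w‖ + ‖w‖ * ‖z^r - w^r‖ := by
          rw [norm_mul, norm_mul, norm_pow]
      _ ≤ 1 * ‖z - w‖ + 1 * (r * ‖z - w‖) := by
          have h1 : ‖z‖ ^ r ≤ 1 := pow_le_one₀ (norm_nonneg _) hz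
          have h2 := norm_nonneg (z - w)
          have h3 := norm_nonneg (z^r - w^r)
          have h4 : (0:ℝ) ≤ r * ‖z - w‖ := by positivity
          apply add_le_add
          · exact mul_le_mul_of_nonneg_right h1 h2
          · calc ‖w‖ * ‖z^r - w^r‖
                ≤ 1 * ‖z^r - w^r‖ := mul_le_mul_of_nonneg_right hw h3
              _ = ‖z^r - w^r‖ := one_mul _
              _ ≤ r * ‖z - w‖ := ih
              _ = 1 * (r * ‖z - w‖) := (one_mul _).symm
      _ = (↑(r+1)) * ‖z - w‖ := by push_cast; ring

lemma quad_lower (m : ℕ) (hm : 0 < m) (w : Fin m → ℂ) (hw : Function.Injective w) :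
    ∃ c : ℝ, 0 < c ∧ ∀ a : Fin m → ℝ,
      c * ∑ r, (a r)^2 ≤ ∑ k, ‖∑ r : Fin m, w k ^ (r:ℕ) * (a r : ℂ)‖^2 := by
  classical
  set E := EuclideanSpace ℝ (Fin m)
  let g : E → ℝ := fun a => ∑ k, ‖∑ r : Fin m, w k ^ (r:ℕ) * (a r : ℂ)‖^2
  have hgcont : Continuous g := by
    apply continuous_finset_sum
    intro k _
    apply Continuous.pow
    apply continuous_norm.comp
    apply continuous_finset_sum
    intro r _
    have happ : Continuous fun a : E => a r := PiLp.continuous_apply 2 _ r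
    exact continuous_const.mul (Complex.continuous_ofReal.comp happ)
  have hgnonneg : ∀ a : E, 0 ≤ g a := fun a =>
    Finset.sum_nonneg fun k _ => sq_nonneg _
  have hgpos : ∀ a : E, a ≠ 0 → 0 < g a := by
    intro a ha
    rcases (hgnonneg a).lt_or_eq with h | h
    · exact h
    exfalso
    have hz : ∀ k : Fin m, (∑ r : Fin m, w k ^ (r:ℕ) * (a r : ℂ)) = 0 := by
      intro k
      have := (Finset.sum_eq_zero_iff_of_nonneg (fun k _ => sq_nonneg
        (‖∑ r : Fin m, w k ^ (r:ℕ) * (a r : ℂ)‖))).mp h.symm k (Finset.mem_univ k)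
      have h2 : ‖∑ r : Fin m, w k ^ (r:ℕ) * (a r : ℂ)‖ = 0 := by
        nlinarith [norm_nonneg (∑ r : Fin m, w k ^ (r:ℕ) * (a r : ℂ))]
      exact norm_eq_zero.mp h2
    have := Matrix.eq_zero_of_forall_index_sum_pow_mul_eq_zero hw hz
    apply ha
    ext r
    have : ((a r : ℂ)) = 0 := congrFun this r
    simpa using this
  -- min on sphere
  haveI : Nonempty (Fin m) := ⟨⟨0, hm⟩⟩
  haveI : Nontrivial E := by
    obtain ⟨k⟩ := (inferInstance : Nonempty (Fin m))
    refine ⟨0, EuclideanSpace.single k 1, ?_⟩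
    intro h
    have := congrArg (fun v : E => v k) h.symm
    beta_reduce at this
    have h0 : (0:E) k = 0 := rfl
    rw [h0, EuclideanSpace.single_apply] at this
    simp at this
  have hcs : IsCompact (Metric.sphere (0:E) 1) := isCompact_sphere 0 1
  have hne : (Metric.sphere (0:E) 1).Nonempty :=
    NormedSpace.sphere_nonempty.mpr zero_le_one
  obtain ⟨b, hbs, hbmin⟩ := hcs.exists_isMinOn hne hgcont.continuousOn
  have hb0 : b ≠ 0 := by
    intro h
    rw [h] at hbs
    simp at hbs
  set c := g b with hcdef
  have hcpos : 0 < c := hgpos b hb0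
  refine ⟨c, hcpos, ?_⟩
  intro a
  by_cases ha : a = 0
  · subst ha
    simp [g]
  · set a' : E := WithLp.toLp 2 a
    have ha' : a' ≠ 0 := by intro h; apply ha; exact congrArg WithLp.ofLp h
    have hna : 0 < ‖a'‖ := norm_pos_iff.mpr ha'
    set t : ℝ := ‖a'‖
    have hb' : (t⁻¹ • a') ∈ Metric.sphere (0:E) 1 := by
      simp [norm_smul, abs_of_pos hna, abs_of_pos (inv_pos.mpr hna), inv_mul_cancel₀ hna.ne']
      exact inv_mul_cancel₀ hna.ne'
    have hmin := hbmin hb'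
    have hgs : g (t⁻¹ • a') = t⁻¹^2 * g a' := by
      simp only [g]
      rw [Finset.mul_sum]
      congr 1
      funext k
      have : (∑ r : Fin m, w k ^ (r:ℕ) * (((t⁻¹ • a') r : ℝ) : ℂ))
          = (t⁻¹ : ℂ) * ∑ r : Fin m, w k ^ (r:ℕ) * ((a' r : ℝ) : ℂ) := by
        rw [Finset.mul_sum]
        congr 1
        funext r
        have : (t⁻¹ • a') r = t⁻¹ * a' r := rfl
        rw [this]
        push_cast
        ring
      rw [this, norm_mul]
      have habs : ‖((t:ℂ))⁻¹‖ = t⁻¹ := by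
        rw [norm_inv, Complex.norm_real, Real.norm_eq_abs, abs_of_pos hna]
      rw [habs]
      ring
    have hnormsq : ‖a'‖^2 = ∑ r, (a r)^2 := by
      rw [EuclideanSpace.norm_eq]
      rw [Real.sq_sqrt (Finset.sum_nonneg fun r _ => sq_nonneg _)]
      congr 1
      funext r
      rw [Real.norm_eq_abs, _root_.sq_abs]
    have : c ≤ t⁻¹^2 * g a' := by rw [← hgs]; exact hmin
    have hga : g a' = ∑ k, ‖∑ r : Fin m, w k ^ (r:ℕ) * (a r : ℂ)‖^2 := rfl
    have ht2 : t^2 = ∑ r, (a r)^2 := hnormsq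
    calc c * ∑ r, (a r)^2 = c * t^2 := by rw [ht2]
      _ ≤ (t⁻¹^2 * g a') * t^2 := by
          apply mul_le_mul_of_nonneg_right this (sq_nonneg t)
      _ = g a' := by
          rw [hga]
          field_simp

set_option maxHeartbeats 2000000 in
/-- Lemma 8 of the paper.  For a fixed integer `q ≥ 0` there exist
`η > 0` and `N` such that for all `n ≥ N` and all reals `a₀, …, a_q`,
`n⁻¹ ∑_{j=1}^{⌊n/2⌋} (j/n)^{2q+1} |∑_{r=0}^q (1 - e^{iλ_j})^{-r} a_r|² ≥ η ∑_r a_r²`,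
where `λ_j = 2πj/n`. -/
theorem stmt_0 (q : ℕ) :
    ∃ η : ℝ, 0 < η ∧ ∃ N : ℕ, ∀ n : ℕ, N ≤ n → ∀ a : Fin (q + 1) → ℝ,
      η * ∑ r, (a r) ^ 2 ≤
        (n : ℝ)⁻¹ * ∑ j ∈ Finset.Icc 1 (n / 2),
          ((j : ℝ) / (n : ℝ)) ^ (2 * q + 1) *
            ‖∑ r : Fin (q + 1),
              (1 - Complex.exp (Complex.I * (2 * Real.pi * j / n))) ^ (-((r : ℕ) : ℤ)) *
                (a r : ℂ)‖ ^ 2 := by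
  have hπ : (0:ℝ) < Real.pi := Real.pi_pos
  have hq2 : (0:ℝ) < (q:ℝ) + 2 := by positivity
  set μ : Fin (q+1) → ℝ :=
    fun k => Real.pi/2 + Real.pi * ((k:ℕ)+1) / (4*((q:ℝ)+2)) with hμdef
  have hμlb : ∀ k, Real.pi/2 + Real.pi/(4*((q:ℝ)+2)) ≤ μ k := by
    intro k
    have h1 : (1:ℝ) ≤ ((k:ℕ):ℝ)+1 := by
      have := Nat.cast_nonneg (α:=ℝ) (k:ℕ); linarith
    have : Real.pi/(4*((q:ℝ)+2)) ≤ Real.pi * ((k:ℕ)+1) / (4*((q:ℝ)+2)) := by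
      apply div_le_div_of_nonneg_right _ (by positivity)
      nlinarith
    simp only [hμdef]; linarith
  have hμub : ∀ k, μ k ≤ 3*Real.pi/4 := by
    intro k
    have hk : ((k:ℕ):ℝ) + 1 ≤ (q:ℝ) + 2 := by
      have : (k:ℕ) < q + 1 := k.isLt
      have : ((k:ℕ):ℝ) ≤ q := by exact_mod_cast Nat.lt_succ_iff.mp this
      linarith
    have : Real.pi * ((k:ℕ)+1) / (4*((q:ℝ)+2)) ≤ Real.pi/4 := by
      rw [div_le_div_iff₀ (by positivity) (by norm_num)]
      nlinarith
    simp only [hμdef]; linarith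
  have hμinj : Function.Injective μ := by
    intro k l h
    simp only [hμdef] at h
    field_simp at h
    exact Fin.ext (by exact_mod_cast (by linarith : ((k:ℕ):ℝ) = (l:ℕ)))
  have hμ0 : ∀ k, 0 < μ k := fun k => lt_of_lt_of_le (by positivity) (hμlb k)
  have hμ2π : ∀ k, μ k < 2*Real.pi := fun k => lt_of_le_of_lt (hμub k) (by linarith)
  have hμpi2 : ∀ k, Real.pi/2 ≤ μ k := by
    intro k
    have h1 := hμlb k
    have h2 : 0 < Real.pi/(4*((q:ℝ)+2)) := by positivity
    linarith
  have hμpi : ∀ k, μ k ≤ Real.pi := fun k => le_trans (hμub k) (by linarith)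
  have hwinj : Function.Injective (fun k => zc (μ k)) := by
    intro k l h
    by_contra hne
    exact zc_inj (hμ0 k) (hμ2π k) (hμ0 l) (hμ2π l)
      (fun he => hne (hμinj he)) h
  obtain ⟨c, hc, hquad⟩ := quad_lower (q+1) (Nat.succ_pos q) _ hwinj
  have hq1 : (0:ℝ) < (q:ℝ) + 1 := by positivity
  set γ : ℝ := Real.sqrt (c/((q:ℝ)+1)) with hγdef
  have hγpos : 0 < γ := Real.sqrt_pos.mpr (by positivity)
  have hγsq : γ^2 = c/((q:ℝ)+1) := Real.sq_sqrt (by positivity)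
  set K : ℝ := ((q:ℝ)+1)*(q:ℝ) + 1 with hKdef
  have hKpos : 0 < K := by positivity
  set ρ : ℝ := min (γ/K) (Real.pi/(16*((q:ℝ)+2))) with hρdef
  have hρpos : 0 < ρ := lt_min (by positivity) (by positivity)
  have hρ1 : ρ ≤ γ/K := min_le_left _ _
  have hρ2 : ρ ≤ Real.pi/(16*((q:ℝ)+2)) := min_le_right _ _
  clear_value γ K ρ
  have hηpos : 0 < ρ * γ^2 / (8*Real.pi) * (1/4:ℝ)^(2*q+1) := by
    apply mul_pos
    · exact div_pos (mul_pos hρpos (pow_pos hγpos 2)) (by positivity)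
    · exact pow_pos (by norm_num) _
  refine ⟨ρ * γ^2 / (8*Real.pi) * (1/4:ℝ)^(2*q+1), hηpos,
    ⌈4*Real.pi/ρ⌉₊ + 1, ?_⟩
  intro n hn a
  have hn4 : 4*Real.pi/ρ ≤ (n:ℝ) := by
    have h1 : (⌈4*Real.pi/ρ⌉₊ : ℝ) ≤ (n:ℝ) := by
      exact_mod_cast le_trans (Nat.le_succ _) hn
    exact le_trans (Nat.le_ceil _) h1
  have hn0 : (0:ℝ) < n := lt_of_lt_of_le (by positivity) hn4
  have hnρ : 4*Real.pi ≤ (n:ℝ)*ρ := by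
    rw [div_le_iff₀ hρpos] at hn4; linarith
  set S := ∑ r, (a r)^2 with hSdef
  have hS0 : 0 ≤ S := Finset.sum_nonneg fun r _ => sq_nonneg _
  have hterm_nonneg : ∀ j ∈ Finset.Icc 1 (n/2), (0:ℝ) ≤
      ((j : ℝ) / (n : ℝ)) ^ (2 * q + 1) *
        ‖∑ r : Fin (q + 1),
          (1 - Complex.exp (Complex.I * (2 * Real.pi * j / n))) ^ (-((r : ℕ) : ℤ)) *
            (a r : ℂ)‖ ^ 2 := by
    intro j _
    apply mul_nonneg (by positivity) (sq_nonneg _)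
  rcases hS0.eq_or_lt with hSz | hSpos
  · rw [← hSz, mul_zero]
    exact mul_nonneg (by positivity) (Finset.sum_nonneg hterm_nonneg)
  -- main case: 0 < S
  set s := Real.sqrt S with hsdef
  have hspos : 0 < s := Real.sqrt_pos.mpr hSpos
  have hs2 : s^2 = S := Real.sq_sqrt hS0
  set P : ℂ → ℂ := fun z => ∑ r : Fin (q+1), z^(r:ℕ) * (a r : ℂ) with hPdef
  have hquada : c * S ≤ ∑ k, ‖P (zc (μ k))‖^2 := hquad a
  clear_value S s P
  have hconst : ∑ _k : Fin (q+1), (c/((q:ℝ)+1) * S) = c * S := by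
    rw [Finset.sum_const, Finset.card_univ, Fintype.card_fin, nsmul_eq_mul]
    push_cast
    field_simp
  have hexk : ∃ k : Fin (q+1), c/((q:ℝ)+1) * S ≤ ‖P (zc (μ k))‖^2 := by
    have hle : (∑ _k : Fin (q+1), (c/((q:ℝ)+1) * S)) ≤
        ∑ k, ‖P (zc (μ k))‖^2 := by rw [hconst]; exact hquada
    obtain ⟨k, _, hk⟩ := Finset.exists_le_of_sum_le ⟨0, Finset.mem_univ 0⟩ hle
    exact ⟨k, hk⟩
  obtain ⟨k₀, hk₀⟩ := hexk
  have hγs : γ * s ≤ ‖P (zc (μ k₀))‖ := by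
    have h1 : (γ*s)^2 = c/((q:ℝ)+1) * S := by rw [mul_pow, hγsq, hs2]
    nlinarith only [hk₀, h1, norm_nonneg (P (zc (μ k₀))),
      mul_pos hγpos hspos]
  have habs_a : ∀ r : Fin (q+1), |a r| ≤ s := by
    intro r
    have h1 : (a r)^2 ≤ S := by
      rw [hSdef]
      exact Finset.single_le_sum (fun i _ => sq_nonneg (a i)) (Finset.mem_univ r)
    have h2 := Real.sqrt_le_sqrt h1
    rw [hsdef]
    rwa [Real.sqrt_sq_eq_abs] at h2
  have hlip : ∀ z z' : ℂ, ‖z‖ ≤ 1 → ‖z'‖ ≤ 1 →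
      ‖P z - P z'‖ ≤ K * s * ‖z - z'‖ := by
    intro z z' hz hz'
    have hPsub : P z - P z' = ∑ r : Fin (q+1), (z^(r:ℕ) - z'^(r:ℕ)) * (a r : ℂ) := by
      rw [hPdef]
      simp only []
      rw [← Finset.sum_sub_distrib]
      apply Finset.sum_congr rfl
      intro r _
      ring
    rw [hPsub]
    have h4' : (0:ℝ) ≤ ‖z - z'‖ := norm_nonneg _
    calc ‖∑ r : Fin (q+1), (z^(r:ℕ) - z'^(r:ℕ)) * (a r : ℂ)‖
        ≤ ∑ r : Fin (q+1), ‖(z^(r:ℕ) - z'^(r:ℕ)) * (a r : ℂ)‖ :=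
          norm_sum_le _ _
      _ ≤ ∑ _r : Fin (q+1), (q:ℝ) * ‖z - z'‖ * s := by
          apply Finset.sum_le_sum
          intro r _
          rw [norm_mul, Complex.norm_real, Real.norm_eq_abs]
          have h1 : ‖z^(r:ℕ) - z'^(r:ℕ)‖ ≤ (r:ℕ) * ‖z - z'‖ :=
            pow_lip z z' hz hz' (r:ℕ)
          have h2 : ((r:ℕ):ℝ) ≤ (q:ℝ) := by
            have : (r:ℕ) ≤ q := Nat.lt_succ_iff.mp r.isLt
            exact_mod_cast this
          have h3 := habs_a r
          have h5 : (0:ℝ) ≤ |a r| := abs_nonneg _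
          calc ‖z^(r:ℕ) - z'^(r:ℕ)‖ * |a r|
              ≤ ((q:ℝ) * ‖z - z'‖) * s := by
                apply mul_le_mul _ h3 h5 (by positivity)
                refine le_trans h1 (mul_le_mul_of_nonneg_right h2 h4')
            _ = (q:ℝ) * ‖z - z'‖ * s := by ring
      _ = ((q:ℝ)+1) * ((q:ℝ) * ‖z - z'‖ * s) := by
          rw [Finset.sum_const, Finset.card_univ, Fintype.card_fin, nsmul_eq_mul]
          push_cast
          ring
      _ = (((q:ℝ)+1)*(q:ℝ))*(s*‖z - z'‖) := by ring
      _ ≤ (((q:ℝ)+1)*(q:ℝ)+1)*(s*‖z - z'‖) :=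
          mul_le_mul_of_nonneg_right (by linarith only)
            (mul_nonneg hspos.le h4')
      _ = K * s * ‖z - z'‖ := by rw [hKdef]; ring
  set μ₀ := μ k₀ with hμ₀def
  have hμ₀lb : Real.pi/2 + Real.pi/(4*((q:ℝ)+2)) ≤ μ₀ := hμlb k₀
  have hμ₀ub : μ₀ ≤ 3*Real.pi/4 := hμub k₀
  have hμ₀pi2 : Real.pi/2 ≤ μ₀ := hμpi2 k₀
  have hμ₀pi : μ₀ ≤ Real.pi := hμpi k₀
  have hγs' : γ * s ≤ ‖P (zc μ₀)‖ := hγs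
  clear_value μ₀
  have hρsmall : ρ ≤ Real.pi/(4*((q:ℝ)+2)) := le_trans hρ2 (by
    apply div_le_div_of_nonneg_left hπ.le (by positivity)
    nlinarith)
  have hlow : Real.pi/2 ≤ μ₀ - ρ := by
    linarith only [hμ₀lb, hρsmall]
  have hhigh : μ₀ + ρ ≤ Real.pi := by
    have h1 := hμub k₀
    have h2 : ρ ≤ Real.pi/4 := le_trans hρ2 (by
      apply div_le_div_of_nonneg_left hπ.le (by norm_num)
      nlinarith)
    linarith only [hμ₀ub, h2, hπ]
  set B : ℝ := (n:ℝ)/(2*Real.pi) with hBdef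
  have hB : 0 < B := by positivity
  set j1 := ⌈B * (μ₀ - ρ)⌉₊ with hj1def
  set j2 := ⌊B * (μ₀ + ρ)⌋₊ with hj2def
  have hBμρ : 0 < B * (μ₀ - ρ) := mul_pos hB (by linarith only [hlow, hπ])
  have hj1pos : 1 ≤ j1 := Nat.ceil_pos.mpr hBμρ
  have hj1r : B * (μ₀ - ρ) ≤ (j1:ℝ) := Nat.le_ceil _
  have hj2r : (j2:ℝ) ≤ B * (μ₀ + ρ) := Nat.floor_le (mul_nonneg hB.le
    (by linarith only [hlow, hρpos, hπ]))
  have hc1 : (j1:ℝ) ≤ B * (μ₀ - ρ) + 1 := le_of_lt (Nat.ceil_lt_add_one hBμρ.le)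
  have hc2 : B * (μ₀ + ρ) - 1 ≤ (j2:ℝ) := by
    have := Nat.lt_floor_add_one (B * (μ₀ + ρ))
    linarith only [this]
  clear_value B j1 j2
  have hj2n : j2 ≤ n/2 := by
    have hBπ : B * Real.pi = (n:ℝ)/2 := by
      rw [hBdef]
      field_simp
    have h1 : (j2:ℝ) ≤ (n:ℝ)/2 := by
      have h0 : B * (μ₀ + ρ) ≤ B * Real.pi := mul_le_mul_of_nonneg_left hhigh hB.le
      linarith
    have h2 : (j2:ℕ) * 2 ≤ n := by exact_mod_cast (by linarith : ((j2:ℕ):ℝ) * 2 ≤ (n:ℝ))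
    exact (Nat.le_div_iff_mul_le (by norm_num)).mpr h2
  have hsub : Finset.Icc j1 j2 ⊆ Finset.Icc 1 (n/2) := by
    intro j hj
    rw [Finset.mem_Icc] at hj ⊢
    exact ⟨le_trans hj1pos hj.1, le_trans hj.2 hj2n⟩
  have hbound : ∀ j ∈ Finset.Icc j1 j2,
      (1/4:ℝ)^(2*q+1) * (γ*s/2)^2 ≤
        ((j : ℝ) / (n : ℝ)) ^ (2 * q + 1) *
          ‖∑ r : Fin (q + 1),
            (1 - Complex.exp (Complex.I * (2 * Real.pi * j / n))) ^ (-((r : ℕ) : ℤ)) *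
              (a r : ℂ)‖ ^ 2 := by
    intro j hj
    rw [Finset.mem_Icc] at hj
    set l : ℝ := 2*Real.pi*(j:ℝ)/(n:ℝ) with hldef
    clear_value l
    have hjlow : B * (μ₀ - ρ) ≤ (j:ℝ) := le_trans hj1r (by exact_mod_cast hj.1)
    have hjhigh : (j:ℝ) ≤ B * (μ₀ + ρ) := le_trans (by exact_mod_cast hj.2) hj2r
    have hll : μ₀ - ρ ≤ l := by
      rw [hBdef, div_mul_eq_mul_div, div_le_iff₀ (by positivity : (0:ℝ) < 2*Real.pi)] at hjlow
      rw [hldef, le_div_iff₀ hn0]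
      linarith
    have hlh : l ≤ μ₀ + ρ := by
      rw [hBdef, div_mul_eq_mul_div, le_div_iff₀ (by positivity : (0:ℝ) < 2*Real.pi)] at hjhigh
      rw [hldef, div_le_iff₀ hn0]
      linarith
    have hlpi2 : Real.pi/2 ≤ l := le_trans hlow hll
    have hlpi : l ≤ Real.pi := le_trans hlh hhigh
    have hinner : (∑ r : Fin (q + 1),
        (1 - Complex.exp (Complex.I * (2 * Real.pi * j / n))) ^ (-((r : ℕ) : ℤ)) *
          (a r : ℂ)) = P (zc l) := by
      rw [hPdef]
      apply Finset.sum_congr rfl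
      intro r _
      congr 1
      rw [show Complex.I * (2 * (Real.pi:ℂ) * (j:ℂ) / (n:ℂ)) = Complex.I * ((l : ℝ) : ℂ) from by
        rw [hldef]; push_cast; ring]
      rw [zpow_neg, zpow_natCast, zc, inv_pow]
    rw [hinner]
    have hzl : ‖zc l‖ ≤ 1 := zc_abs_le l hlpi2 hlpi
    have hzμ : ‖zc μ₀‖ ≤ 1 := zc_abs_le μ₀ hμ₀pi2 hμ₀pi
    have hzdiff : ‖zc l - zc μ₀‖ ≤ ρ/2 := by
      have h1 := zc_lip l μ₀ hlpi2 hlpi hμ₀pi2 hμ₀pi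
      have h2 : |l - μ₀| ≤ ρ := abs_le.mpr ⟨by linarith only [hll], by linarith only [hlh]⟩
      linarith only [h1, h2]
    have hPl : γ*s/2 ≤ ‖P (zc l)‖ := by
      have h1 := hlip (zc l) (zc μ₀) hzl hzμ
      have h2 : K * s * ‖zc l - zc μ₀‖ ≤ K * s * (ρ/2) :=
        mul_le_mul_of_nonneg_left hzdiff (mul_nonneg hKpos.le hspos.le)
      have hKρ : ρ * K ≤ γ := (le_div_iff₀ hKpos).mp hρ1
      have h3 : K * s * (ρ/2) ≤ γ * s / 2 := by
        calc K * s * (ρ/2) = (ρ*K)*(s/2) := by ring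
          _ ≤ γ*(s/2) := mul_le_mul_of_nonneg_right hKρ (div_nonneg hspos.le (by norm_num))
          _ = γ * s / 2 := by ring
      have htri : ‖P (zc μ₀)‖ ≤
          ‖P (zc l)‖ + ‖P (zc l) - P (zc μ₀)‖ := by
        have h := norm_add_le (P (zc l)) (P (zc μ₀) - P (zc l))
        have he : P (zc l) + (P (zc μ₀) - P (zc l)) = P (zc μ₀) := by ring
        rw [he] at h
        have hsym : ‖P (zc μ₀) - P (zc l)‖ =
            ‖P (zc l) - P (zc μ₀)‖ := norm_sub_rev _ _
        linarith only [h, hsym]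
      linarith only [htri, h1, h2, h3, hγs']
    have hjn : (1/4:ℝ) ≤ (j:ℝ)/(n:ℝ) := by
      have hx : l = 2*Real.pi*((j:ℝ)/(n:ℝ)) := by rw [hldef]; ring
      have h := hlpi2
      rw [hx] at h
      nlinarith only [h, hπ]
    have hpow : (1/4:ℝ)^(2*q+1) ≤ ((j:ℝ)/(n:ℝ))^(2*q+1) :=
      pow_le_pow_left₀ (by norm_num) hjn _
    have hsq : (γ*s/2)^2 ≤ ‖P (zc l)‖^2 :=
      pow_le_pow_left₀ (div_nonneg (mul_nonneg hγpos.le hspos.le) (by norm_num)) hPl 2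
    apply mul_le_mul hpow hsq (sq_nonneg _) (by positivity)
  set T := (1/4:ℝ)^(2*q+1) * (γ*s/2)^2 with hTdef
  have hTnn : 0 ≤ T := by positivity
  clear_value T
  have hcard : B * ρ ≤ ((Finset.Icc j1 j2).card : ℝ) := by
    have h2Bρ : 2 ≤ B * ρ := by
      rw [hBdef, div_mul_eq_mul_div, le_div_iff₀ (by positivity : (0:ℝ) < 2*Real.pi)]
      linarith only [hnρ]
    have e1 : B*(μ₀-ρ) = B*μ₀ - B*ρ := by ring
    have e2 : B*(μ₀+ρ) = B*μ₀ + B*ρ := by ring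
    have hj12 : j1 ≤ j2 := by
      have : (j1:ℝ) ≤ (j2:ℝ) := by linarith only [hc1, hc2, h2Bρ, e1, e2]
      exact_mod_cast this
    have hcardeq : ((Finset.Icc j1 j2).card : ℝ) = (j2:ℝ) + 1 - (j1:ℝ) := by
      rw [Nat.card_Icc]
      have h : j1 ≤ j2 + 1 := le_trans hj12 (Nat.le_succ _)
      rw [Nat.cast_sub h]
      push_cast
      ring
    rw [hcardeq]
    linarith only [hc1, hc2, h2Bρ, e1, e2]
  have hsum1 : ((Finset.Icc j1 j2).card : ℝ) * T ≤
      ∑ j ∈ Finset.Icc j1 j2,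
        ((j : ℝ) / (n : ℝ)) ^ (2 * q + 1) *
          ‖∑ r : Fin (q + 1),
            (1 - Complex.exp (Complex.I * (2 * Real.pi * j / n))) ^ (-((r : ℕ) : ℤ)) *
              (a r : ℂ)‖ ^ 2 := by
    have := Finset.card_nsmul_le_sum (Finset.Icc j1 j2) _ T hbound
    rwa [nsmul_eq_mul] at this
  have hsum2 : ∑ j ∈ Finset.Icc j1 j2,
        ((j : ℝ) / (n : ℝ)) ^ (2 * q + 1) *
          ‖∑ r : Fin (q + 1),
            (1 - Complex.exp (Complex.I * (2 * Real.pi * j / n))) ^ (-((r : ℕ) : ℤ)) *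
              (a r : ℂ)‖ ^ 2 ≤
      ∑ j ∈ Finset.Icc 1 (n/2),
        ((j : ℝ) / (n : ℝ)) ^ (2 * q + 1) *
          ‖∑ r : Fin (q + 1),
            (1 - Complex.exp (Complex.I * (2 * Real.pi * j / n))) ^ (-((r : ℕ) : ℤ)) *
              (a r : ℂ)‖ ^ 2 :=
    Finset.sum_le_sum_of_subset_of_nonneg hsub (fun j hj _ => hterm_nonneg j hj)
  have hfinal : ρ * γ^2 / (8*Real.pi) * (1/4:ℝ)^(2*q+1) * S = (n:ℝ)⁻¹ * (B * ρ * T) := by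
    rw [hTdef, hBdef, ← hs2]
    field_simp
    ring
  calc ρ * γ^2 / (8*Real.pi) * (1/4:ℝ)^(2*q+1) * S
      = (n:ℝ)⁻¹ * (B * ρ * T) := hfinal
    _ ≤ (n:ℝ)⁻¹ * ∑ j ∈ Finset.Icc 1 (n/2),
          ((j : ℝ) / (n : ℝ)) ^ (2 * q + 1) *
            ‖∑ r : Fin (q + 1),
              (1 - Complex.exp (Complex.I * (2 * Real.pi * j / n))) ^ (-((r : ℕ) : ℤ)) *
                (a r : ℂ)‖ ^ 2 := by
        apply mul_le_mul_of_nonneg_left _ (inv_nonneg.mpr hn0.le)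
        calc B * ρ * T ≤ ((Finset.Icc j1 j2).card : ℝ) * T :=
              mul_le_mul_of_nonneg_right hcard hTnn
          _ ≤ _ := hsum1
          _ ≤ _ := hsum2
end

section
/- Let γ : ℤ → ℝ be even with ∑_{k∈ℤ} |γ(k)| < ∞ and ∑_{k∈ℤ} |k γ(k)| < ∞. Then there exists a constant C, depending only on γ, such that for every n ≥ 2 and all integers 1 ≤ j, k ≤ n−1 with j + k ≠ n, | ∑_{t=1}^{n} ∑_{s=1}^{n} γ(t−s) e^{i(t λ_j + s λ_k)} | ≤ C, where λ_j = 2πj/n. -/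
open Finset

set_option maxHeartbeats 1000000 in
/-- step in Lemma 7 of the paper.  For an even, absolutely summable
covariance function `γ` with `∑ |k γ(k)| < ∞`, the double sums
`∑_{t,s=1}^n γ(t-s) e^{i(tλ_j + sλ_k)}` are uniformly bounded over `n ≥ 2` and
`1 ≤ j, k ≤ n-1` with `j + k ≠ n`, where `λ_j = 2πj/n`. -/
theorem stmt_6 (γ : ℤ → ℝ) (heven : ∀ k, γ (-k) = γ k)
    (h1 : Summable fun k : ℤ => |γ k|)
    (h2 : Summable fun k : ℤ => |(k : ℝ) * γ k|) :
    ∃ C : ℝ, ∀ n : ℕ, 2 ≤ n → ∀ j k : ℕ,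
      1 ≤ j → j ≤ n - 1 → 1 ≤ k → k ≤ n - 1 → j + k ≠ n →
      ‖∑ t ∈ Finset.Icc 1 n, ∑ s ∈ Finset.Icc 1 n,
        ((γ ((t : ℤ) - (s : ℤ)) : ℝ) : ℂ) *
          Complex.exp (Complex.I *
            ((t : ℂ) * (2 * (Real.pi : ℂ) * j / n) + (s : ℂ) * (2 * (Real.pi : ℂ) * k / n)))‖ ≤ C := by
  classical
  refine ⟨∑' h : ℤ, |(h : ℝ) * γ h|, ?_⟩
  intro n hn j k hj1 hj2 hk1 hk2 hjk
  have hn0 : (n : ℝ) ≠ 0 := by positivity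
  have hnC : (n : ℂ) ≠ 0 := Nat.cast_ne_zero.mpr (by omega)
  set a : ℝ := 2 * Real.pi * j / n with ha
  set b : ℝ := 2 * Real.pi * k / n with hb
  set z : ℂ := Complex.exp ((↑(a + b) : ℂ) * Complex.I) with hz
  set g : ℤ → ℂ := fun h => (γ h : ℂ) * Complex.exp ((↑((h : ℝ) * a) : ℂ) * Complex.I) with hg
  have hgnorm : ∀ h : ℤ, ‖g h‖ = |γ h| := by
    intro h
    simp [hg, map_mul, Complex.norm_exp]
  have hgsum : Summable g := Summable.of_norm (by simpa only [hgnorm] using h1)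
  -- the key real identity
  have hab : a + b = 2 * Real.pi * (j + k) / n := by
    rw [ha, hb]; field_simp
  -- z^n = 1
  have hzn : z ^ n = 1 := by
    rw [hz, ← Complex.exp_nat_mul]
    have : (n : ℂ) * ((↑(a + b) : ℂ) * Complex.I) =
        ((j + k : ℕ) : ℤ) * (2 * (Real.pi : ℂ) * Complex.I) := by
      rw [hab]
      push_cast
      field_simp
    rw [this, Complex.exp_int_mul_two_pi_mul_I]
  -- z ≠ 1
  have hz1 : z ≠ 1 := by
    intro h
    rw [hz, Complex.exp_eq_one_iff] at h
    obtain ⟨m, hm⟩ := h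
    have him : a + b = m * (2 * Real.pi) := by
      have := congrArg Complex.im hm
      simpa using this
    rw [hab] at him
    have hpos : (0:ℝ) < 2 * Real.pi := by positivity
    have hnR : (0:ℝ) < (n:ℝ) := by positivity
    have him' : ((j:ℝ) + k) = (m : ℝ) * n := by
      have h2π : (2 * Real.pi : ℝ) ≠ 0 := ne_of_gt hpos
      apply mul_left_cancel₀ h2π
      field_simp at him
      linear_combination (2 * Real.pi) * him
    have hjk' : ((j:ℤ) + k) = m * n := by exact_mod_cast him'
    have hn2 : (2:ℤ) ≤ (n:ℤ) := by exact_mod_cast hn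
    have hp2 : (2:ℤ) ≤ (j:ℤ) + k := by
      have : 2 ≤ j + k := by omega
      exact_mod_cast this
    have hpn : (j:ℤ) + k ≤ 2 * (n:ℤ) - 2 := by
      have : j + k ≤ 2 * n - 2 := by omega
      push_cast
      omega
    have hpne : (j:ℤ) + k ≠ (n:ℤ) := by
      intro hc
      exact hjk (by exact_mod_cast hc)
    have hm1 : 1 ≤ m := by
      by_contra hc
      push_neg at hc
      have hm0 : m ≤ 0 := by omega
      nlinarith
    have hm2 : m ≤ 1 := by
      by_contra hc
      push_neg at hc
      have hm0 : 2 ≤ m := by omega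
      nlinarith
    have : m = 1 := le_antisymm hm2 hm1
    rw [this, one_mul] at hjk'
    exact hpne hjk'
  -- geometric sum vanishes
  have hgeo : ∑ s ∈ Icc 1 n, z ^ s = 0 := by
    have hIcc : Icc 1 n = Ico 1 (n + 1) := by rw [← Finset.Ico_add_one_right_eq_Icc]
    rw [hIcc, geom_sum_Ico hz1 (by omega)]
    have : z ^ (n + 1) = z := by rw [pow_succ, hzn, one_mul]
    rw [this, pow_one, sub_self, zero_div]
  set G : ℕ → ℂ := fun s => ∑ t ∈ Icc 1 n, g ((t : ℤ) - (s : ℤ)) with hG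
  set A : ℂ := ∑' h : ℤ, g h with hA
  -- rewrite the double sum
  have hstep : (∑ t ∈ Finset.Icc 1 n, ∑ s ∈ Finset.Icc 1 n,
        ((γ ((t : ℤ) - (s : ℤ)) : ℝ) : ℂ) *
          Complex.exp (Complex.I *
            ((t : ℂ) * (2 * (Real.pi : ℂ) * j / n) + (s : ℂ) * (2 * (Real.pi : ℂ) * k / n))))
      = ∑ s ∈ Icc 1 n, (G s - A) * z ^ s := by
    have e1 : ∀ t s : ℕ, ((γ ((t : ℤ) - (s : ℤ)) : ℝ) : ℂ) *
          Complex.exp (Complex.I *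
            ((t : ℂ) * (2 * (Real.pi : ℂ) * j / n) + (s : ℂ) * (2 * (Real.pi : ℂ) * k / n)))
        = g ((t : ℤ) - (s : ℤ)) * z ^ s := by
      intro t s
      simp only [hg, hz]
      rw [← Complex.exp_nat_mul,
        mul_assoc (((γ ((t : ℤ) - (s : ℤ)) : ℝ)) : ℂ), ← Complex.exp_add]
      congr 2
      rw [ha, hb]
      push_cast
      field_simp
      ring
    rw [Finset.sum_comm]
    have e2 : ∀ s : ℕ, (∑ t ∈ Icc 1 n, ((γ ((t : ℤ) - (s : ℤ)) : ℝ) : ℂ) *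
          Complex.exp (Complex.I *
            ((t : ℂ) * (2 * (Real.pi : ℂ) * j / n) + (s : ℂ) * (2 * (Real.pi : ℂ) * k / n))))
        = G s * z ^ s := by
      intro s
      rw [hG, Finset.sum_mul]
      exact Finset.sum_congr rfl fun t _ => e1 t s
    rw [Finset.sum_congr rfl fun s _ => e2 s]
    rw [Finset.sum_congr rfl fun s _ => (sub_mul (G s) A (z ^ s)),
      Finset.sum_sub_distrib, ← Finset.mul_sum, hgeo, mul_zero, sub_zero]
  rw [hstep]
  -- the image finsets
  set F : ℕ → Finset ℤ := fun s => (Icc 1 n).image (fun t : ℕ => (t : ℤ) - (s : ℤ)) with hF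
  have hmemF : ∀ s : ℕ, ∀ h : ℤ, h ∈ F s ↔ 1 ≤ (s : ℤ) + h ∧ (s : ℤ) + h ≤ n := by
    intro s h
    simp only [hF, Finset.mem_image, Finset.mem_Icc]
    constructor
    · rintro ⟨t, ⟨ht1, ht2⟩, rfl⟩; omega
    · rintro ⟨hh1, hh2⟩
      exact ⟨((s : ℤ) + h).toNat, by omega, by omega⟩
  -- bound each |G s - A|
  have key : ∀ s : ℕ, ‖G s - A‖ ≤
      ∑' h : ℤ, Set.indicator ((F s : Set ℤ))ᶜ (fun h => |γ h|) h := by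
    intro s
    have hFsum : ∑ h ∈ F s, g h = G s := by
      rw [hF, hG, Finset.sum_image]
      intro t1 _ t2 _ h
      simp only at h
      omega
    have hcompl := Summable.sum_add_tsum_compl (s := F s) hgsum
    rw [hFsum] at hcompl
    have hGA : G s - A = -(∑' (x : ↑((F s : Set ℤ))ᶜ), g ↑x) := by
      rw [hA, ← hcompl]; ring
    rw [hGA, norm_neg]
    calc ‖∑' (x : ↑((F s : Set ℤ))ᶜ), g ↑x‖
        ≤ ∑' (x : ↑((F s : Set ℤ))ᶜ), ‖g ↑x‖ := by
          apply norm_tsum_le_tsum_norm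
          simp only [hgnorm]
          exact h1.subtype _
      _ = ∑' (x : ↑((F s : Set ℤ))ᶜ), |γ ↑x| := by
          exact tsum_congr fun x => hgnorm x
      _ = ∑' h : ℤ, Set.indicator ((F s : Set ℤ))ᶜ (fun h => |γ h|) h :=
          _root_.tsum_subtype (((F s : Set ℤ))ᶜ) (fun h => |γ h|)
  -- cardinality bound
  have hcard : ∀ h : ℤ, ((Icc 1 n).filter (fun s : ℕ => h ∉ F s)).card ≤ h.natAbs := by
    intro h
    rcases le_or_gt 0 h with hh | hh
    · have hsub : (Icc 1 n).filter (fun s : ℕ => h ∉ F s) ⊆ Icc (n + 1 - h.toNat) n := by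
        intro s hs
        simp only [Finset.mem_filter, Finset.mem_Icc, hmemF] at hs ⊢
        omega
      calc ((Icc 1 n).filter (fun s : ℕ => h ∉ F s)).card
          ≤ (Icc (n + 1 - h.toNat) n).card := Finset.card_le_card hsub
        _ = n + 1 - (n + 1 - h.toNat) := Nat.card_Icc _ _
        _ ≤ h.natAbs := by omega
    · have hsub : (Icc 1 n).filter (fun s : ℕ => h ∉ F s) ⊆ Icc 1 (-h).toNat := by
        intro s hs
        simp only [Finset.mem_filter, Finset.mem_Icc, hmemF] at hs ⊢
        omega
      calc ((Icc 1 n).filter (fun s : ℕ => h ∉ F s)).card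
          ≤ (Icc 1 (-h).toNat).card := Finset.card_le_card hsub
        _ = (-h).toNat + 1 - 1 := Nat.card_Icc _ _
        _ ≤ h.natAbs := by omega
  -- main chain
  have hfinal : ∑ s ∈ Icc 1 n,
      (∑' h : ℤ, Set.indicator ((F s : Set ℤ))ᶜ (fun h => |γ h|) h)
      ≤ ∑' h : ℤ, |(h : ℝ) * γ h| := by
    rw [(Summable.tsum_finsetSum (fun s _ => h1.indicator ((F s : Set ℤ))ᶜ)).symm]
    apply Summable.tsum_le_tsum _ (summable_sum fun s _ => h1.indicator ((F s : Set ℤ))ᶜ) h2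
    intro h
    have e : ∀ s : ℕ, Set.indicator ((F s : Set ℤ))ᶜ (fun h => |γ h|) h
        = if h ∉ F s then |γ h| else 0 := by
      intro s
      simp [Set.indicator_apply]
    rw [Finset.sum_congr rfl fun s _ => e s, ← Finset.sum_filter, Finset.sum_const,
      nsmul_eq_mul]
    have habs : |(h : ℝ) * γ h| = (h.natAbs : ℝ) * |γ h| := by
      rw [abs_mul]
      congr 1
      rw [Nat.cast_natAbs]
      push_cast
      rfl
    rw [habs]
    apply mul_le_mul_of_nonneg_right _ (abs_nonneg _)
    exact_mod_cast hcard h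
  have hznorm : ‖z‖ = 1 := by
    rw [hz, Complex.norm_exp_ofReal_mul_I]
  calc ‖∑ s ∈ Icc 1 n, (G s - A) * z ^ s‖
      = ‖∑ s ∈ Icc 1 n, (G s - A) * z ^ s‖ := rfl
    _ ≤ ∑ s ∈ Icc 1 n, ‖(G s - A) * z ^ s‖ := norm_sum_le _ _
    _ = ∑ s ∈ Icc 1 n, ‖G s - A‖ := by
        apply Finset.sum_congr rfl
        intro s _
        rw [norm_mul, norm_pow, hznorm, one_pow, mul_one]
    _ ≤ ∑ s ∈ Icc 1 n,
        (∑' h : ℤ, Set.indicator ((F s : Set ℤ))ᶜ (fun h => |γ h|) h) :=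
          Finset.sum_le_sum fun s _ => key s
    _ ≤ ∑' h : ℤ, |(h : ℝ) * γ h| := hfinal
end

section
/- Let γ : ℤ → ℝ be even with ∑_{k∈ℤ} |γ(k)| < ∞ and ∑_{k∈ℤ} |k γ(k)| < ∞, and define f_u(λ) = (2π)^{-1} ∑_{h∈ℤ} γ(h) e^{ihλ}. Then there exists a constant C, depending only on γ, such that for every n ≥ 2 and all integers 1 ≤ j, k ≤ n−1: | ∑_{t=1}^{n} ∑_{s=1}^{n} γ(t−s) e^{i(t λ_j − s λ_k)} − 𝟙(j = k) · 2π n f_u(λ_j) | ≤ C, where λ_j = 2πj/n. -/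
open Finset

private lemma geom_Icc_zero (c : ℂ) (n : ℕ) (hcn : c ^ n = 1) (hc1 : c ≠ 1) :
    ∑ s ∈ Finset.Icc 1 n, c ^ (s : ℤ) = 0 := by
  have h : ∀ s ∈ Finset.Icc 1 n, c ^ (s : ℤ) = c * c ^ (s - 1) := by
    intro s hs
    simp only [Finset.mem_Icc] at hs
    rw [zpow_natCast]
    rw [← pow_succ']
    congr 1; omega
  rw [Finset.sum_congr rfl h, ← Finset.mul_sum]
  have : ∑ s ∈ Finset.Icc 1 n, c ^ (s - 1) = ∑ i ∈ Finset.range n, c ^ i := by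
    refine Finset.sum_nbij' (fun s => s - 1) (fun i => i + 1) ?_ ?_ ?_ ?_ ?_ <;>
      simp [Finset.mem_Icc, Finset.mem_range] <;> omega
  rw [this, geom_sum_eq hc1, hcn]
  simp

private lemma geom_Icc_one (n : ℕ) : ∑ s ∈ Finset.Icc 1 n, (1:ℂ) ^ (s : ℤ) = n := by
  simp [Nat.card_Icc]

private lemma double_sum_eq (γ : ℤ → ℝ) (a c : ℂ) (n : ℕ) :
    ∑ t ∈ Finset.Icc 1 n, ∑ s ∈ Finset.Icc 1 n,
      ((γ ((t:ℤ) - (s:ℤ)) : ℝ):ℂ) * a ^ ((t:ℤ) - (s:ℤ)) * c ^ (s:ℤ)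
    = ∑ h ∈ Finset.Icc (1 - (n:ℤ)) ((n:ℤ) - 1), ((γ h : ℝ):ℂ) * a ^ h *
        ∑ s ∈ Finset.Icc 1 n,
          (if 1 ≤ (s:ℤ) + h ∧ (s:ℤ) + h ≤ (n:ℤ) then c ^ (s:ℤ) else 0) := by
  classical
  have rhs : ∀ h : ℤ, ((γ h : ℝ):ℂ) * a ^ h *
        ∑ s ∈ Finset.Icc 1 n,
          (if 1 ≤ (s:ℤ) + h ∧ (s:ℤ) + h ≤ (n:ℤ) then c ^ (s:ℤ) else 0)
      = ∑ s ∈ Finset.Icc 1 n,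
          (if 1 ≤ (s:ℤ) + h ∧ (s:ℤ) + h ≤ (n:ℤ) then ((γ h : ℝ):ℂ) * a ^ h * c ^ (s:ℤ) else 0) := by
    intro h
    rw [Finset.mul_sum]
    refine Finset.sum_congr rfl fun s _ => ?_
    split <;> simp
  simp only [rhs]
  rw [Finset.sum_comm]; conv_rhs => rw [Finset.sum_comm]
  refine Finset.sum_congr rfl fun s hs => ?_
  simp only [Finset.mem_Icc] at hs
  have step1 : ∑ h ∈ Finset.Icc (1 - (n:ℤ)) ((n:ℤ) - 1),
      (if 1 ≤ (s:ℤ) + h ∧ (s:ℤ) + h ≤ (n:ℤ) then ((γ h : ℝ):ℂ) * a ^ h * c ^ (s:ℤ) else 0)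
      = ∑ h ∈ Finset.Icc (1 - (s:ℤ)) ((n:ℤ) - (s:ℤ)), ((γ h : ℝ):ℂ) * a ^ h * c ^ (s:ℤ) := by
    rw [← Finset.sum_filter]
    refine Finset.sum_congr ?_ fun _ _ => rfl
    ext x
    simp only [Finset.mem_filter, Finset.mem_Icc]
    omega
  rw [step1]
  refine Finset.sum_nbij' (fun t => (t:ℤ) - (s:ℤ)) (fun h => (h + (s:ℤ)).toNat) ?_ ?_ ?_ ?_ ?_
  · intro t ht; simp only [Finset.mem_Icc] at *; omega
  · intro h hh; simp only [Finset.mem_Icc] at *; omega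
  · intro t ht; simp only [Finset.mem_Icc] at ht; omega
  · intro h hh; simp only [Finset.mem_Icc] at hh; omega
  · intro t ht; rfl

private lemma T_sub_F_bound (c : ℂ) (hc : ‖c‖ = 1) (n : ℕ) (h : ℤ) :
    ‖(∑ s ∈ Finset.Icc 1 n,
        if 1 ≤ (s:ℤ) + h ∧ (s:ℤ) + h ≤ (n:ℤ) then c ^ (s:ℤ) else 0)
      - ∑ s ∈ Finset.Icc 1 n, c ^ (s:ℤ)‖ ≤ |(h:ℝ)| := by
  classical
  have hc0 : c ≠ 0 := by
    intro h0; rw [h0] at hc; simp at hc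
  set P : ℕ → Prop := fun s => 1 ≤ (s:ℤ) + h ∧ (s:ℤ) + h ≤ (n:ℤ) with hP
  have e1 : (∑ s ∈ Finset.Icc 1 n, if P s then c ^ (s:ℤ) else 0)
      - ∑ s ∈ Finset.Icc 1 n, c ^ (s:ℤ)
      = ∑ s ∈ Finset.Icc 1 n, (if P s then 0 else -c ^ (s:ℤ)) := by
    rw [← Finset.sum_sub_distrib]
    refine Finset.sum_congr rfl fun s _ => ?_
    split <;> ring
  rw [e1]
  calc ‖∑ s ∈ Finset.Icc 1 n, (if P s then 0 else -c ^ (s:ℤ))‖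
      ≤ ∑ s ∈ Finset.Icc 1 n, ‖(if P s then 0 else -c ^ (s:ℤ))‖ := by
        exact norm_sum_le _ _
    _ = ∑ s ∈ Finset.Icc 1 n, (if ¬ P s then (1:ℝ) else 0) := by
        refine Finset.sum_congr rfl fun s _ => ?_
        by_cases hp : P s
        · rw [if_pos hp, if_neg (not_not_intro hp), norm_zero]
        · rw [if_neg hp, if_pos hp, norm_neg, norm_zpow, hc, one_zpow]
    _ = ((Finset.Icc 1 n).filter (fun s => ¬ P s)).card := Finset.sum_boole _ _
    _ ≤ |(h:ℝ)| := by
        have hcard : (((Finset.Icc 1 n).filter (fun s => ¬ P s)).card : ℝ) ≤ (h.natAbs : ℝ) := by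
          have : ((Finset.Icc 1 n).filter (fun s => ¬ P s)).card ≤ h.natAbs := by
            rcases le_or_gt 0 h with hh | hh
            · have hsub : (Finset.Icc 1 n).filter (fun s => ¬ P s)
                  ⊆ Finset.Icc (n + 1 - h.toNat) n := by
                intro s hs
                simp only [Finset.mem_filter, Finset.mem_Icc, hP, not_and, not_le] at hs ⊢
                omega
              have := Finset.card_le_card hsub
              rw [Nat.card_Icc] at this
              omega
            · have hsub : (Finset.Icc 1 n).filter (fun s => ¬ P s)
                  ⊆ Finset.Icc 1 (-h).toNat := by
                intro s hs
                simp only [Finset.mem_filter, Finset.mem_Icc, hP, not_and, not_le] at hs ⊢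
                omega
              have := Finset.card_le_card hsub
              rw [Nat.card_Icc] at this
              omega
          exact_mod_cast this
        simpa [Nat.cast_natAbs] using hcard

private lemma exp_split (x y : ℝ) (t s : ℕ) :
    Complex.exp (Complex.I * ((t:ℂ) * ((x:ℝ):ℂ) - (s:ℂ) * ((y:ℝ):ℂ)))
      = Complex.exp (((x:ℝ):ℂ) * Complex.I) ^ ((t:ℤ) - (s:ℤ)) *
        Complex.exp (((x - y : ℝ):ℂ) * Complex.I) ^ ((s:ℤ)) := by
  rw [← Complex.exp_int_mul, ← Complex.exp_int_mul, ← Complex.exp_add]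
  congr 1
  push_cast
  ring

/-- Spectral density `f_u(λ) = (2π)⁻¹ ∑_{h∈ℤ} γ(h) e^{ihλ}`. -/
noncomputable def specDens (γ : ℤ → ℝ) (lam : ℝ) : ℂ :=
  ((2 * Real.pi : ℝ) : ℂ)⁻¹ * ∑' h : ℤ, ((γ h : ℝ) : ℂ) * Complex.exp (Complex.I * (h : ℂ) * (lam : ℂ))

/-- step in Lemma 7 of the paper.  For an even, absolutely summable `γ`
with `∑|kγ(k)| < ∞` and `f_u(λ) = (2π)⁻¹ ∑ γ(h) e^{ihλ}`, the quantities
`∑_{t,s=1}^n γ(t-s) e^{i(tλ_j - sλ_k)} - 𝟙(j=k)·2πn·f_u(λ_j)` are uniformly bounded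
over `n ≥ 2` and `1 ≤ j, k ≤ n-1`, where `λ_j = 2πj/n`. -/
theorem stmt_7 (γ : ℤ → ℝ) (heven : ∀ k, γ (-k) = γ k)
    (h1 : Summable fun k : ℤ => |γ k|)
    (h2 : Summable fun k : ℤ => |(k : ℝ) * γ k|) :
    ∃ C : ℝ, ∀ n : ℕ, 2 ≤ n → ∀ j k : ℕ,
      1 ≤ j → j ≤ n - 1 → 1 ≤ k → k ≤ n - 1 →
      ‖(∑ t ∈ Finset.Icc 1 n, ∑ s ∈ Finset.Icc 1 n,
        ((γ ((t : ℤ) - (s : ℤ)) : ℝ) : ℂ) *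
          Complex.exp (Complex.I *
            ((t : ℂ) * (2 * (Real.pi : ℂ) * j / n) - (s : ℂ) * (2 * (Real.pi : ℂ) * k / n))))
        - (if j = k then 2 * (Real.pi : ℂ) * n * specDens γ (2 * Real.pi * j / n) else 0)‖ ≤ C := by
  classical
  refine ⟨∑' h : ℤ, |(h:ℝ) * γ h|, ?_⟩
  intro n hn j k hj1 hjn hk1 hkn
  have hnR : (n:ℝ) ≠ 0 := by positivity
  have hnC : (n:ℂ) ≠ 0 := by exact_mod_cast Nat.cast_ne_zero.mpr (by omega)
  set x : ℝ := 2 * Real.pi * j / n with hx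
  set y : ℝ := 2 * Real.pi * k / n with hy
  set a : ℂ := Complex.exp (((x:ℝ):ℂ) * Complex.I) with ha
  set c : ℂ := Complex.exp (((x - y : ℝ):ℂ) * Complex.I) with hc
  have haa : ‖a‖ = 1 := Complex.norm_exp_ofReal_mul_I _
  have hca : ‖c‖ = 1 := Complex.norm_exp_ofReal_mul_I _
  set T : ℤ → ℂ := fun h => ∑ s ∈ Finset.Icc 1 n,
      (if 1 ≤ (s:ℤ) + h ∧ (s:ℤ) + h ≤ (n:ℤ) then c ^ (s:ℤ) else 0) with hT
  set F : ℂ := ∑ s ∈ Finset.Icc 1 n, c ^ (s:ℤ) with hF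
  have cx : (2 * (Real.pi:ℂ) * (j:ℂ) / (n:ℂ)) = ((x:ℝ):ℂ) := by rw [hx]; push_cast; ring
  have cy : (2 * (Real.pi:ℂ) * (k:ℂ) / (n:ℂ)) = ((y:ℝ):ℂ) := by rw [hy]; push_cast; ring
  -- the double sum as a finite sum over lags
  have hS : (∑ t ∈ Finset.Icc 1 n, ∑ s ∈ Finset.Icc 1 n,
        ((γ ((t : ℤ) - (s : ℤ)) : ℝ) : ℂ) *
          Complex.exp (Complex.I *
            ((t : ℂ) * (2 * (Real.pi : ℂ) * j / n) - (s : ℂ) * (2 * (Real.pi : ℂ) * k / n))))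
      = ∑ h ∈ Finset.Icc (1 - (n:ℤ)) ((n:ℤ) - 1), ((γ h : ℝ):ℂ) * a ^ h * T h := by
    rw [← double_sum_eq γ a c n]
    refine Finset.sum_congr rfl fun t _ => Finset.sum_congr rfl fun s _ => ?_
    rw [cx, cy, exp_split x y t s, ← ha, ← hc, mul_assoc]
  have hTzero : ∀ h : ℤ, h ∉ Finset.Icc (1 - (n:ℤ)) ((n:ℤ) - 1) →
      ((γ h : ℝ):ℂ) * a ^ h * T h = 0 := by
    intro h hh
    simp only [Finset.mem_Icc, not_and, not_le] at hh
    have : T h = 0 := by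
      refine Finset.sum_eq_zero fun s hs => ?_
      simp only [Finset.mem_Icc] at hs
      rw [if_neg]
      omega
    rw [this, mul_zero]
  have hS' : (∑ t ∈ Finset.Icc 1 n, ∑ s ∈ Finset.Icc 1 n,
        ((γ ((t : ℤ) - (s : ℤ)) : ℝ) : ℂ) *
          Complex.exp (Complex.I *
            ((t : ℂ) * (2 * (Real.pi : ℂ) * j / n) - (s : ℂ) * (2 * (Real.pi : ℂ) * k / n))))
      = ∑' h : ℤ, ((γ h : ℝ):ℂ) * a ^ h * T h :=
    hS.trans (tsum_eq_sum hTzero).symm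
  -- the value of the full geometric sum
  have hFval : F = if j = k then (n:ℂ) else 0 := by
    by_cases hjk : j = k
    · rw [if_pos hjk]
      have hc1 : c = 1 := by
        rw [hc]
        have hxy : x - y = 0 := by rw [hx, hy, hjk]; ring
        rw [hxy]
        simp
      rw [hF, hc1, geom_Icc_one]
    · rw [if_neg hjk, hF]
      apply geom_Icc_zero
      · rw [hc, ← Complex.exp_nat_mul]
        have harg : (n:ℂ) * (((x - y : ℝ):ℂ) * Complex.I)
            = (((j:ℤ) - (k:ℤ) : ℤ):ℂ) * (2 * (Real.pi:ℂ) * Complex.I) := by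
          rw [hx, hy]
          push_cast
          field_simp
        rw [harg]
        exact Complex.exp_int_mul_two_pi_mul_I _
      · intro h1
        rw [hc, Complex.exp_eq_one_iff] at h1
        obtain ⟨m, hm⟩ := h1
        have hm' : ((x - y : ℝ):ℂ) = (m:ℂ) * (2 * (Real.pi:ℂ)) :=
          mul_right_cancel₀ Complex.I_ne_zero (by rw [hm]; ring)
        have hmr : (x - y : ℝ) = (m:ℝ) * (2 * Real.pi) := by exact_mod_cast hm'
        rw [hx, hy] at hmr
        have h2π : (2 * Real.pi) ≠ 0 := by positivity
        have hjkr : ((j:ℝ) - k) = (m:ℝ) * n := by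
          apply mul_left_cancel₀ h2π
          field_simp at hmr
          linear_combination (2 * Real.pi) * hmr
        have hjki : (j:ℤ) - k = m * n := by exact_mod_cast hjkr
        rcases lt_trichotomy m 0 with hm0 | hm0 | hm0
        · have : m * n ≤ -1 * n := by
            apply mul_le_mul_of_nonneg_right (by omega) (by positivity)
          omega
        · rw [hm0] at hjki; simp at hjki; omega
        · have : 1 * (n:ℤ) ≤ m * n := by
            apply mul_le_mul_of_nonneg_right (by omega) (by positivity)
          omega
  -- the subtracted term as a tsum
  have hexp : ∀ h : ℤ, Complex.exp (Complex.I * (h:ℂ) * ((2 * Real.pi * (j:ℝ) / n : ℝ):ℂ))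
      = a ^ h := by
    intro h
    rw [ha, ← Complex.exp_int_mul]
    congr 1
    rw [hx]
    push_cast
    ring
  have hW : (if j = k then 2 * (Real.pi:ℂ) * n * specDens γ (2 * Real.pi * j / n) else 0)
      = ∑' h : ℤ, ((γ h : ℝ):ℂ) * a ^ h * F := by
    by_cases hjk : j = k
    · rw [if_pos hjk, hFval, if_pos hjk]
      simp only [specDens]
      rw [tsum_mul_right]
      have htc : (∑' h : ℤ, ((γ h : ℝ):ℂ) * Complex.exp (Complex.I * (h:ℂ) *
          ((2 * Real.pi * (j:ℝ) / n : ℝ):ℂ))) = ∑' h : ℤ, ((γ h : ℝ):ℂ) * a ^ h :=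
        tsum_congr fun h => by rw [hexp h]
      rw [htc]
      have hπC : (Real.pi:ℂ) ≠ 0 := Complex.ofReal_ne_zero.mpr Real.pi_ne_zero
      field_simp
      push_cast
      ring
    · rw [if_neg hjk, hFval, if_neg hjk]
      simp
  -- summability
  have hnorm_ga : ∀ h : ℤ, ‖((γ h : ℝ):ℂ) * a ^ h‖ = |γ h| := by
    intro h
    rw [norm_mul, norm_zpow, haa, one_zpow,
      mul_one, Complex.norm_real, Real.norm_eq_abs]
  have hsumA : Summable fun h : ℤ => ((γ h : ℝ):ℂ) * a ^ h * T h :=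
    summable_of_ne_finset_zero hTzero
  have hsumB : Summable fun h : ℤ => ((γ h : ℝ):ℂ) * a ^ h * F := by
    apply Summable.mul_right
    apply Summable.of_norm
    simpa only [hnorm_ga] using h1
  rw [hS', hW, ← Summable.tsum_sub hsumA hsumB]
  have hptwise : ∀ h : ℤ, ‖((γ h : ℝ):ℂ) * a ^ h * T h - ((γ h : ℝ):ℂ) * a ^ h * F‖
      ≤ |(h:ℝ) * γ h| := by
    intro h
    rw [← mul_sub, norm_mul, hnorm_ga]
    calc |γ h| * ‖T h - F‖ ≤ |γ h| * |(h:ℝ)| := by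
          apply mul_le_mul_of_nonneg_left _ (abs_nonneg _)
          exact T_sub_F_bound c hca n h
      _ = |(h:ℝ) * γ h| := by rw [abs_mul, mul_comm]
  have hsnorm : Summable fun h : ℤ =>
      ‖((γ h : ℝ):ℂ) * a ^ h * T h - ((γ h : ℝ):ℂ) * a ^ h * F‖ :=
    Summable.of_nonneg_of_le (fun _ => norm_nonneg _) hptwise h2
  calc ‖∑' h : ℤ, (((γ h : ℝ):ℂ) * a ^ h * T h - ((γ h : ℝ):ℂ) * a ^ h * F)‖
      ≤ ∑' h : ℤ, ‖((γ h : ℝ):ℂ) * a ^ h * T h - ((γ h : ℝ):ℂ) * a ^ h * F‖ := by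
        exact norm_tsum_le_tsum_norm hsnorm
    _ ≤ ∑' h : ℤ, |(h:ℝ) * γ h| := Summable.tsum_le_tsum hptwise hsnorm h2
end
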